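/- Let D₁, D₂ be t-structures on a triangulated category with D₁^{≤0} ⊆ D₂^{≤0}, and let (U^{≤0}, U^{≥1}) be a pair of full subcategories of H = D₁^{≥1} ∩ D₂^{≤0} satisfying Hom(U^{≤0}, U^{≥1}) = 0 and such that every object of H sits in a triangle with first term in U^{≤0} and third term in U^{≥1}. Then the pair (D₁^{≤0} ∗ U^{≤0}, U^{≥1} ∗ D₂^{≥1}) satisfies the Hom-orthogonality and decomposition axioms of a t-structure on D: Hom(D₁^{≤0} ∗ U^{≤0}, U^{≥1} ∗ D₂^{≥1}) = 0, and every object X of D fits into a distinguished triangle R → X → Q → ΣR with R ∈ D₁^{≤0} ∗ U^{≤0} and Q ∈ U^{≥1} ∗ D₂^{≥1}. -/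

import Mathlib

open CategoryTheory Category Limits Pretriangulated Triangulated

variable {C : Type*} [Category C] [Preadditive C] [HasZeroObject C] [HasShift C ℤ]
  [∀ (n : ℤ), (shiftFunctor C n).Additive] [Pretriangulated C] [IsTriangulated C]

/-- `ExtStar S T` is the class of objects `Z` fitting in a distinguished triangle
`A → Z → B → A⟦1⟧` with `A ∈ S` and `B ∈ T`. -/
def ExtStar (S T : C → Prop) : C → Prop := fun Z =>
  ∃ (A B : C) (_ : S A) (_ : T B) (f : A ⟶ Z) (g : Z ⟶ B) (h : B ⟶ A⟦(1 : ℤ)⟧),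
    Triangle.mk f g h ∈ distTriang C

/-- An object is `≥ 1` for a t-structure as soon as it receives no nonzero map
from objects that are `≤ 0`. -/
lemma aux_mem_ge_of_orth (t : TStructure C) (X : C)
    (hX : ∀ (A : C), t.le 0 A → ∀ (f : A ⟶ X), f = 0) : t.ge 1 X := by
  obtain ⟨A, B, hA, hB, f, g, h, hT⟩ := t.exists_triangle_zero_one X
  obtain ⟨s, hs⟩ := Triangle.coyoneda_exact₂ _ (inv_rot_of_distTriang _ hT) (𝟙 A)
    ((Category.id_comp f).trans (hX A hA f))
  have hs0 : s = 0 := t.zero' s hA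
    (t.ge_antitone one_le_two _ (t.ge_shift 1 (-1) 2 (by omega) B hB))
  have hzero : IsZero A := by
    rw [IsZero.iff_id_eq_zero, hs, hs0]; exact zero_comp
  have : IsIso g := (Triangle.isZero₁_iff_isIso₂ _ hT).1 hzero
  exact (t.ge 1).prop_of_iso (asIso g).symm hB

/-- An object is `≤ 0` for a t-structure as soon as it has no nonzero map
to objects that are `≥ 1`. -/
lemma aux_mem_le_of_orth (t : TStructure C) (X : C)
    (hX : ∀ (B : C), t.ge 1 B → ∀ (f : X ⟶ B), f = 0) : t.le 0 X := by
  obtain ⟨A, B, hA, hB, f, g, h, hT⟩ := t.exists_triangle_zero_one X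
  obtain ⟨r, hr⟩ := Triangle.yoneda_exact₂ _ (rot_of_distTriang _ hT) (𝟙 B)
    ((Category.comp_id g).trans (hX B hB g))
  have hr0 : r = 0 := t.zero' r
    (t.le_monotone (show (-1 : ℤ) ≤ 0 by omega) _ (t.le_shift 0 1 (-1) (by omega) A hA)) hB
  have hzero : IsZero B := by
    rw [IsZero.iff_id_eq_zero, hr, hr0]; exact comp_zero
  have : IsIso f := (Triangle.isZero₃_iff_isIso₁ _ hT).1 hzero
  exact (t.le 0).prop_of_iso (asIso f) hA

/-- Transport a distinguished triangle along isomorphisms of its three objects. -/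
lemma aux_distTriang_transport (T : Triangle C) (hT : T ∈ distTriang C)
    {A' B' Y' : C} (e₁ : T.obj₁ ≅ A') (e₂ : T.obj₂ ≅ B') (e₃ : T.obj₃ ≅ Y') :
    ∃ (f : A' ⟶ B') (g : B' ⟶ Y') (h : Y' ⟶ A'⟦(1 : ℤ)⟧),
      Triangle.mk f g h ∈ distTriang C := by
  refine ⟨e₁.inv ≫ T.mor₁ ≫ e₂.hom, e₂.inv ≫ T.mor₂ ≫ e₃.hom,
    e₃.inv ≫ T.mor₃ ≫ e₁.hom⟦(1 : ℤ)⟧', isomorphic_distinguished _ hT _ ?_⟩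
  refine Triangle.isoMk _ _ e₁.symm e₂.symm e₃.symm ?_ ?_ ?_
  · dsimp; exact (by simp : (e₁.inv ≫ T.mor₁ ≫ e₂.hom) ≫ e₂.inv = e₁.inv ≫ T.mor₁)
  · dsimp; exact (by simp : (e₂.inv ≫ T.mor₂ ≫ e₃.hom) ≫ e₃.inv = e₂.inv ≫ T.mor₂)
  · dsimp
    exact (by simp [← Functor.map_comp] : (e₃.inv ≫ T.mor₃ ≫ (shiftFunctor C 1).map e₁.hom) ≫ (shiftFunctor C 1).map e₁.inv = e₃.inv ≫ T.mor₃)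

/-- If `(U^{≤0}, U^{≥1})` is a t-structure on `H = D₁^{≥1} ∩ D₂^{≤0}`, then
`(D₁^{≤0} ∗ U^{≤0}, U^{≥1} ∗ D₂^{≥1})` satisfies the orthogonality and
decomposition axioms of a t-structure on `D`. -/
theorem stmt_6 (t₁ t₂ : TStructure C) (ht : t₁.le 0 ≤ t₂.le 0)
    (U₀ U₁ : C → Prop)
    (hU₀ : ∀ X, U₀ X → t₁.ge 1 X ∧ t₂.le 0 X)
    (hU₁ : ∀ X, U₁ X → t₁.ge 1 X ∧ t₂.le 0 X)
    (horth : ∀ (A B : C) (f : A ⟶ B), U₀ A → U₁ B → f = 0)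
    (hdec : ∀ (X : C), (t₁.ge 1 X ∧ t₂.le 0 X) →
      ∃ (Y Z : C) (_ : U₀ Y) (_ : U₁ Z)
        (f : Y ⟶ X) (g : X ⟶ Z) (h : Z ⟶ Y⟦(1 : ℤ)⟧),
        Triangle.mk f g h ∈ distTriang C) :
    (∀ (A B : C) (f : A ⟶ B),
        ExtStar (t₁.le 0) U₀ A → ExtStar U₁ (t₂.ge 1) B → f = 0) ∧
    (∀ (X : C), ∃ (R Q : C) (_ : ExtStar (t₁.le 0) U₀ R) (_ : ExtStar U₁ (t₂.ge 1) Q)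
      (f : R ⟶ X) (g : X ⟶ Q) (h : Q ⟶ R⟦(1 : ℤ)⟧),
      Triangle.mk f g h ∈ distTriang C) := by
  constructor
  · rintro A B f ⟨A₁, A₂, hA₁, hA₂, a₁, a₂, a₃, hTA⟩ ⟨B₁, B₂, hB₁, hB₂, b₁, b₂, b₃, hTB⟩
    have toB : ∀ (W : C), (∀ g : W ⟶ B₁, g = 0) → (∀ g : W ⟶ B₂, g = 0) →
        ∀ (g : W ⟶ B), g = 0 := by
      intro W h1 h2 g
      obtain ⟨u, rfl⟩ := Triangle.coyoneda_exact₂ _ hTB g (h2 _)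
      rw [h1 u]; exact zero_comp
    have h1 : ∀ g : A₁ ⟶ B, g = 0 := toB A₁
      (fun g' => t₁.zero' g' hA₁ (hU₁ B₁ hB₁).1)
      (fun g' => t₂.zero' g' (ht A₁ hA₁) hB₂)
    have h2 : ∀ g : A₂ ⟶ B, g = 0 := toB A₂
      (fun g' => horth _ _ g' hA₂ hB₁)
      (fun g' => t₂.zero' g' (hU₀ A₂ hA₂).2 hB₂)
    obtain ⟨u, rfl⟩ := Triangle.yoneda_exact₂ _ hTA f (h1 _)
    rw [h2 u]; exact comp_zero
  · intro X
    -- first truncation triangle for t₁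
    obtain ⟨A, B, hA, hB, a, b, c, hT1⟩ := t₁.exists_triangle_zero_one X
    -- second truncation triangle for t₂, applied to B
    obtain ⟨B', B'', hB', hB'', p, q, r, hT2⟩ := t₂.exists_triangle_zero_one B
    -- B' lies in the heart H
    have hB'ge : t₁.ge 1 B' := by
      apply aux_mem_ge_of_orth t₁ B'
      intro A₀ hA₀ f
      obtain ⟨s, hs⟩ := Triangle.coyoneda_exact₂ _ (inv_rot_of_distTriang _ hT2) f
        (by exact t₁.zero' _ hA₀ hB)
      have hs0 : s = 0 := t₂.zero' s (ht A₀ hA₀)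
        (t₂.ge_antitone one_le_two _ (t₂.ge_shift 1 (-1) 2 (by omega) B'' hB''))
      rw [hs, hs0]; exact zero_comp
    -- decompose B' inside the heart
    obtain ⟨Y, Z, hY, hZ, y, z, w, hT3⟩ := hdec B' ⟨hB'ge, hB'⟩
    -- glue: cone of Y ⟶ B
    obtain ⟨Q, g', h', hT4⟩ := distinguished_cocone_triangle (y ≫ p)
    have H₁ := someOctahedron rfl hT3 hT2 hT4
    have hQ : ExtStar U₁ (t₂.ge 1) Q := ⟨Z, B'', hZ, hB'', H₁.m₁, H₁.m₃, _, H₁.mem⟩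
    -- define R as the cocone of X ⟶ Q
    obtain ⟨R, f', h'', hT5⟩ := distinguished_cocone_triangle₁ (b ≫ g')
    have H₂ := someOctahedron (u₁₂ := b) (u₂₃ := g') (u₁₃ := b ≫ g') rfl
      (rot_of_distTriang _ hT1) (rot_of_distTriang _ hT4) (rot_of_distTriang _ hT5)
    -- H₂.mem : A⟦1⟧ ⟶ R⟦1⟧ ⟶ Y⟦1⟧ distinguished; deshift it
    have hT6 := Triangle.shift_distinguished _ H₂.mem (-1)
    obtain ⟨f₀, g₀, h₀, hT7⟩ := aux_distTriang_transport _ hT6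
      ((shiftFunctorCompIsoId C (1 : ℤ) (-1) (by omega)).app A)
      ((shiftFunctorCompIsoId C (1 : ℤ) (-1) (by omega)).app R)
      ((shiftFunctorCompIsoId C (1 : ℤ) (-1) (by omega)).app Y)
    have hR : ExtStar (t₁.le 0) U₀ R := ⟨A, Y, hA, hY, f₀, g₀, h₀, hT7⟩
    exact ⟨R, Q, hR, hQ, f', b ≫ g', h'', hT5⟩
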